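/- Assume additionally that λ < a and λ < h. Then for every ε > 0 there exists y′ < y_∞ such that for every y ∈ (y′, y_∞) not equal to any y_k and every x ∈ (0,π): (a) 1/L(y) < ε; (b) |∂₁ψ(x,y)·∂₂ψ(x,y)| / (√(1 + ∂₁ψ(x,y)² + ∂₂ψ(x,y)²)·L(y)) < ε; and (c) |L(y)·∂_y L(x,y) − L(x,y)·∂_y L(y)| / L(y)² < ε. (These three quantities are the coefficients of the pulled-back 1-form ω_M in an orthonormal tangent frame of the graph of ψ; hence ω_M tends to 0 uniformly as y → y_∞ and extends continuously by 0.) -/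

import Mathlib

open Real MeasureTheory Set Filter

noncomputable section

namespace StokesCounterexample

/-- `ySeq a k = Σ_{j=1}^k a^j` (so `ySeq a 0 = 0`). -/
def ySeq (a : ℝ) (k : ℕ) : ℝ := ∑ j ∈ Finset.range k, a ^ (j + 1)

/-- `yInf a = Σ_{j=1}^∞ a^j = a / (1 - a)`. -/
def yInf (a : ℝ) : ℝ := a / (1 - a)

/-- `fSeq h l 0 = 0` and `fSeq h l k x = h^k · sin (x / l^k)` for `k ≥ 1`. -/
def fSeq (h l : ℝ) (k : ℕ) (x : ℝ) : ℝ :=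
  if k = 0 then 0 else h ^ k * Real.sin (x / l ^ k)

open Classical in
/-- The interpolation `ψ(x,y) = (1 - φ_k(y))·f_k(x) + φ_k(y)·f_{k+1}(x)` for
`y ∈ [y_k, y_{k+1})`, where `φ_k(y) = φ((y - y_k)/a^(k+1))`, extended by `0`
outside of `⋃_k [y_k, y_{k+1})` (in particular `ψ(x, y_∞) = 0`). -/
def psi (a h l : ℝ) (φ : ℝ → ℝ) (x y : ℝ) : ℝ :=
  if hk : ∃ k : ℕ, ySeq a k ≤ y ∧ y < ySeq a (k + 1) then
    (1 - φ ((y - ySeq a hk.choose) / a ^ (hk.choose + 1))) * fSeq h l hk.choose x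
      + φ ((y - ySeq a hk.choose) / a ^ (hk.choose + 1)) * fSeq h l (hk.choose + 1) x
  else 0

/-- The partial derivative of `ψ` in the first variable. -/
def psi₁ (a h l : ℝ) (φ : ℝ → ℝ) (x y : ℝ) : ℝ :=
  deriv (fun t => psi a h l φ t y) x

/-- The partial derivative of `ψ` in the second variable. -/
def psi₂ (a h l : ℝ) (φ : ℝ → ℝ) (x y : ℝ) : ℝ :=
  deriv (fun s => psi a h l φ x s) y

/-- The arc length `L(x,y) = ∫_0^x √(1 + (∂₁ψ(t,y))²) dt`. -/
def arc (a h l : ℝ) (φ : ℝ → ℝ) (x y : ℝ) : ℝ :=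
  ∫ t in (0:ℝ)..x, Real.sqrt (1 + psi₁ a h l φ t y ^ 2)

/-- The length `L(y) = L(π, y)` of the section of the graph of `ψ` at height `y`. -/
def len (a h l : ℝ) (φ : ℝ → ℝ) (y : ℝ) : ℝ := arc a h l φ π y

/-! ### Auxiliary definitions for the proof -/

open scoped Topology

/-- The explicit form of `∂₁ψ` on strip `k` with interpolation parameter `u`. -/
def P (h l : ℝ) (k : ℕ) (u t : ℝ) : ℝ :=
  (1 - u) * ((h / l) ^ k * Real.cos (t / l ^ k))
    + u * ((h / l) ^ (k + 1) * Real.cos (t / l ^ (k + 1)))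

/-- The integrand of the arc length on strip `k`. -/
def g (h l : ℝ) (k : ℕ) (u t : ℝ) : ℝ := Real.sqrt (1 + P h l k u t ^ 2)

/-- The `u`-derivative of `P`. -/
def Q (h l : ℝ) (k : ℕ) (t : ℝ) : ℝ :=
  (h / l) ^ (k + 1) * Real.cos (t / l ^ (k + 1)) - (h / l) ^ k * Real.cos (t / l ^ k)

/-- The `u`-derivative of `g`. -/
def gU (h l : ℝ) (k : ℕ) (u t : ℝ) : ℝ :=
  P h l k u t * Q h l k t / Real.sqrt (1 + P h l k u t ^ 2)

/-! ### Basic facts about `ySeq` -/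

lemma ySeq_succ (a : ℝ) (k : ℕ) : ySeq a (k + 1) = ySeq a k + a ^ (k + 1) :=
  Finset.sum_range_succ _ _

lemma ySeq_closed (a : ℝ) (ha1 : a ≠ 1) (k : ℕ) :
    ySeq a k = a * ((1 - a ^ k) / (1 - a)) := by
  have : ySeq a k = a * ∑ j ∈ Finset.range k, a ^ j := by
    rw [ySeq, Finset.mul_sum]
    exact Finset.sum_congr rfl fun j _ => (pow_succ' a j)
  rw [this, geom_sum_eq ha1]
  congr 1
  rw [div_eq_div_iff (by intro hc; apply ha1; linarith [sub_eq_zero.mp hc])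
    (by intro hc; apply ha1; linarith [sub_eq_zero.mp hc])]
  ring

lemma ySeq_lt_yInf {a : ℝ} (ha0 : 0 < a) (ha1 : a < 1) (k : ℕ) : ySeq a k < yInf a := by
  rw [ySeq_closed a ha1.ne, yInf]
  have h1a : (0:ℝ) < 1 - a := by linarith
  have hak : (0:ℝ) < a ^ k := pow_pos ha0 k
  rw [mul_div_assoc', div_lt_div_iff_of_pos_right h1a]
  nlinarith

lemma exists_lt_ySeq {a : ℝ} (ha0 : 0 < a) (ha1 : a < 1) {y : ℝ} (hy : y < yInf a) :
    ∃ K, y < ySeq a K := by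
  have h1a : (0:ℝ) < 1 - a := by linarith
  have htend : Tendsto (fun k : ℕ => ySeq a k) atTop (𝓝 (yInf a)) := by
    have h0 : Tendsto (fun k : ℕ => a ^ k) atTop (𝓝 0) :=
      tendsto_pow_atTop_nhds_zero_of_lt_one ha0.le ha1
    have h2 : Tendsto (fun k : ℕ => a * ((1 - a ^ k) / (1 - a))) atTop
        (𝓝 (a * ((1 - 0) / (1 - a)))) := by
      apply Tendsto.const_mul
      exact ((tendsto_const_nhds.sub h0).div_const _)
    simp only [sub_zero] at h2
    have heq : a * ((1:ℝ) / (1 - a)) = yInf a := by rw [yInf]; field_simp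
    rw [heq] at h2
    exact h2.congr fun k => (ySeq_closed a ha1.ne k).symm
  exact (htend.eventually (eventually_gt_nhds hy)).exists

lemma exists_strip {a : ℝ} (ha0 : 0 < a) (ha1 : a < 1) {y : ℝ} (hy0 : 0 ≤ y)
    (hy : y < yInf a) : ∃ k, ySeq a k ≤ y ∧ y < ySeq a (k + 1) := by
  by_contra hc
  push_neg at hc
  have hall : ∀ k, ySeq a k ≤ y := by
    intro k
    induction k with
    | zero => simpa [ySeq] using hy0
    | succ n ih => exact hc n ih
  rcases exists_lt_ySeq ha0 ha1 hy with ⟨K, hK⟩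
  exact absurd (hall K) (not_le.mpr hK)

lemma strip_unique {a : ℝ} (ha0 : 0 < a) {y : ℝ} {j k : ℕ}
    (hj : ySeq a j ≤ y ∧ y < ySeq a (j + 1)) (hk : ySeq a k ≤ y ∧ y < ySeq a (k + 1)) :
    j = k := by
  have hmono : StrictMono (ySeq a) := strictMono_nat_of_lt_succ fun n => by
    rw [ySeq_succ]; nlinarith [pow_pos ha0 (n + 1)]
  rcases lt_trichotomy j k with hlt | he | hgt
  · exact absurd (le_trans (hmono.monotone hlt) hk.1) (not_le.mpr hj.2)
  · exact he
  · exact absurd (le_trans (hmono.monotone hgt) hj.1) (not_le.mpr hk.2)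

lemma psi_eq {a h l : ℝ} (ha0 : 0 < a) {φ : ℝ → ℝ} {k : ℕ} {y : ℝ}
    (h1 : ySeq a k ≤ y) (h2 : y < ySeq a (k + 1)) (x : ℝ) :
    psi a h l φ x y = (1 - φ ((y - ySeq a k) / a ^ (k + 1))) * fSeq h l k x
      + φ ((y - ySeq a k) / a ^ (k + 1)) * fSeq h l (k + 1) x := by
  have hex : ∃ k : ℕ, ySeq a k ≤ y ∧ y < ySeq a (k + 1) := ⟨k, h1, h2⟩
  rw [psi, dif_pos hex]
  have hck : hex.choose = k := strip_unique ha0 hex.choose_spec ⟨h1, h2⟩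
  rw [hck]

/-! ### Pointwise bounds -/

lemma abs_mul_cos_le {c r θ : ℝ} (hc : |c| ≤ 1) (hr : 0 ≤ r) :
    |c * (r * Real.cos θ)| ≤ r := by
  rw [abs_mul, abs_mul, abs_of_nonneg hr]
  calc |c| * (r * |Real.cos θ|) ≤ 1 * (r * 1) :=
        mul_le_mul hc (mul_le_mul_of_nonneg_left (Real.abs_cos_le_one θ) hr)
          (by positivity) one_pos.le
    _ = r := by ring

lemma hasDerivAt_fSeq {h l : ℝ} (hl0 : 0 < l) {k : ℕ} (hk : k ≠ 0) (x : ℝ) :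
    HasDerivAt (fSeq h l k) ((h / l) ^ k * Real.cos (x / l ^ k)) x := by
  have hlk : (l : ℝ) ^ k ≠ 0 := (pow_pos hl0 k).ne'
  have h1 : HasDerivAt (fun t : ℝ => t / l ^ k) (1 / l ^ k) x := by
    simpa using (hasDerivAt_id x).div_const (l ^ k)
  have h2 : HasDerivAt (fun t : ℝ => Real.sin (t / l ^ k))
      (Real.cos (x / l ^ k) * (1 / l ^ k)) x := (Real.hasDerivAt_sin _).comp x h1
  have h3 : HasDerivAt (fun t : ℝ => h ^ k * Real.sin (t / l ^ k))
      (h ^ k * (Real.cos (x / l ^ k) * (1 / l ^ k))) x := h2.const_mul _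
  have heq : fSeq h l k = fun t : ℝ => h ^ k * Real.sin (t / l ^ k) := by
    funext t; simp [fSeq, hk]
  rw [heq]
  convert h3 using 1
  rw [div_pow]
  field_simp

lemma hasDerivAt_P_t {h l : ℝ} (hl0 : 0 < l) {k : ℕ} (hk : k ≠ 0) (u x : ℝ) :
    HasDerivAt (fun t => (1 - u) * fSeq h l k t + u * fSeq h l (k + 1) t)
      (P h l k u x) x := by
  have h1 : HasDerivAt (fun t => (1 - u) * fSeq h l k t)
      ((1 - u) * ((h / l) ^ k * Real.cos (x / l ^ k))) x :=
    (hasDerivAt_fSeq hl0 hk x).const_mul _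
  have h2 : HasDerivAt (fun t => u * fSeq h l (k + 1) t)
      (u * ((h / l) ^ (k + 1) * Real.cos (x / l ^ (k + 1)))) x :=
    (hasDerivAt_fSeq hl0 (Nat.succ_ne_zero k) x).const_mul _
  exact h1.add h2

lemma hasDerivAt_g_u {h l : ℝ} (k : ℕ) (u t : ℝ) :
    HasDerivAt (fun v => g h l k v t) (gU h l k u t) u := by
  have hP : HasDerivAt (fun v => P h l k v t) (Q h l k t) u := by
    have heq : (fun v => P h l k v t) = fun v =>
        ((h / l) ^ k * Real.cos (t / l ^ k)) + v * Q h l k t := by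
      funext v; simp only [P, Q]; ring
    rw [heq]
    simpa using (hasDerivAt_id' u).mul_const (Q h l k t)
  have hpos : (0:ℝ) < 1 + P h l k u t ^ 2 := by positivity
  have hsq : HasDerivAt (fun v => 1 + P h l k v t ^ 2) (2 * P h l k u t * Q h l k t) u := by
    have h2 := hP.pow 2
    have h3 := (hasDerivAt_const u (1:ℝ)).add h2
    refine h3.congr_deriv ?_
    ring
  have hfin := (Real.hasDerivAt_sqrt hpos.ne').comp u hsq
  refine hfin.congr_deriv ?_
  simp only [gU]
  field_simp

lemma abs_P_le {h l : ℝ} (hh0 : 0 < h) (hl0 : 0 < l) (k : ℕ) {u : ℝ}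
    (hu : u ∈ Set.Icc (0:ℝ) 1) (t : ℝ) :
    |P h l k u t| ≤ (h / l) ^ k + (h / l) ^ (k + 1) := by
  have hr : (0:ℝ) < h / l := div_pos hh0 hl0
  have h1 : |1 - u| ≤ 1 := by rw [abs_le]; constructor <;> [linarith [hu.2]; linarith [hu.1]]
  have h2 : |u| ≤ 1 := by rw [abs_le]; constructor <;> [linarith [hu.1]; linarith [hu.2]]
  calc |P h l k u t| ≤ _ + _ := abs_add_le _ _
    _ ≤ (h / l) ^ k + (h / l) ^ (k + 1) :=
        add_le_add (abs_mul_cos_le h1 (pow_pos hr k).le)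
          (abs_mul_cos_le h2 (pow_pos hr (k + 1)).le)

lemma abs_Q_le {h l : ℝ} (hh0 : 0 < h) (hl0 : 0 < l) (k : ℕ) (t : ℝ) :
    |Q h l k t| ≤ (h / l) ^ k + (h / l) ^ (k + 1) := by
  have hr : (0:ℝ) < h / l := div_pos hh0 hl0
  have e1 : |(1:ℝ) * ((h / l) ^ (k + 1) * Real.cos (t / l ^ (k + 1)))| ≤ (h / l) ^ (k + 1) :=
    abs_mul_cos_le (by simp) (pow_pos hr (k + 1)).le
  have e2 : |(1:ℝ) * ((h / l) ^ k * Real.cos (t / l ^ k))| ≤ (h / l) ^ k :=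
    abs_mul_cos_le (by simp) (pow_pos hr k).le
  rw [one_mul] at e1 e2
  calc |Q h l k t| ≤ _ + _ := abs_sub _ _
    _ ≤ _ := by rw [add_comm ((h / l) ^ k)]; exact add_le_add e1 e2

lemma sqrt_one_add_sq_pos (p : ℝ) : (0:ℝ) < Real.sqrt (1 + p ^ 2) :=
  Real.sqrt_pos.mpr (by positivity)

lemma abs_le_sqrt_one_add_sq (p : ℝ) : |p| ≤ Real.sqrt (1 + p ^ 2) := by
  rw [← Real.sqrt_sq_eq_abs]
  exact Real.sqrt_le_sqrt (by nlinarith)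

lemma abs_gU_le {h l : ℝ} (hh0 : 0 < h) (hl0 : 0 < l) (k : ℕ) (u t : ℝ) :
    |gU h l k u t| ≤ (h / l) ^ k + (h / l) ^ (k + 1) := by
  have hs0 := sqrt_one_add_sq_pos (P h l k u t)
  have step : |gU h l k u t| ≤ |Q h l k t| := by
    rw [gU, abs_div, abs_of_pos hs0, div_le_iff₀ hs0, abs_mul, mul_comm (|P h l k u t|)]
    exact mul_le_mul_of_nonneg_left (abs_le_sqrt_one_add_sq _) (abs_nonneg _)
  exact step.trans (abs_Q_le hh0 hl0 k t)

lemma g_le {h l : ℝ} (hh0 : 0 < h) (hl0 : 0 < l) (k : ℕ) {u : ℝ}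
    (hu : u ∈ Set.Icc (0:ℝ) 1) (t : ℝ) :
    g h l k u t ≤ 1 + ((h / l) ^ k + (h / l) ^ (k + 1)) := by
  rw [g]
  have h1 : Real.sqrt (1 + P h l k u t ^ 2) ≤ 1 + |P h l k u t| := by
    rw [← Real.sqrt_sq (by positivity : (0:ℝ) ≤ 1 + |P h l k u t|)]
    apply Real.sqrt_le_sqrt
    have h2 : |P h l k u t| ^ 2 = P h l k u t ^ 2 := sq_abs _
    nlinarith [abs_nonneg (P h l k u t)]
  exact h1.trans (by linarith [abs_P_le hh0 hl0 k hu t])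

lemma one_le_g (h l : ℝ) (k : ℕ) (u t : ℝ) : 1 ≤ g h l k u t := by
  rw [g]
  have := Real.sqrt_le_sqrt
    (show (1:ℝ) ≤ 1 + P h l k u t ^ 2 by nlinarith [sq_nonneg (P h l k u t)])
  simpa using this

lemma g_nonneg (h l : ℝ) (k : ℕ) (u t : ℝ) : 0 ≤ g h l k u t :=
  le_trans one_pos.le (one_le_g h l k u t)

/-! ### Continuity -/

lemma P_cont (h l : ℝ) (k : ℕ) (u : ℝ) : Continuous (fun t => P h l k u t) := by
  unfold P; fun_prop

lemma Q_cont (h l : ℝ) (k : ℕ) : Continuous (fun t => Q h l k t) := by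
  unfold Q; fun_prop

lemma g_cont (h l : ℝ) (k : ℕ) (u : ℝ) : Continuous (fun t => g h l k u t) := by
  unfold g
  exact Real.continuous_sqrt.comp (continuous_const.add ((P_cont h l k u).pow 2))

lemma gU_cont (h l : ℝ) (k : ℕ) (u : ℝ) : Continuous (fun t => gU h l k u t) := by
  unfold gU
  apply Continuous.div ((P_cont h l k u).mul (Q_cont h l k))
    (Real.continuous_sqrt.comp (continuous_const.add ((P_cont h l k u).pow 2)))
  exact fun t => (sqrt_one_add_sq_pos (P h l k u t)).ne'

/-! ### Periodicity -/

lemma cos_per1 {l : ℝ} (hl0 : 0 < l) (k : ℕ) (t : ℝ) :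
    Real.cos ((t + 2 * π * l ^ k) / l ^ k) = Real.cos (t / l ^ k) := by
  have hlk : (l:ℝ) ^ k ≠ 0 := (pow_pos hl0 k).ne'
  have e1 : (t + 2 * π * l ^ k) / l ^ k = t / l ^ k + 2 * π := by field_simp
  rw [e1, Real.cos_add_two_pi]

lemma cos_per2 {l : ℝ} (hl0 : 0 < l) {N : ℕ} (hN : 0 < N) (hl : l = 1 / N) (k : ℕ) (t : ℝ) :
    Real.cos ((t + 2 * π * l ^ k) / l ^ (k + 1)) = Real.cos (t / l ^ (k + 1)) := by
  have hlk1 : (l:ℝ) ^ (k + 1) ≠ 0 := (pow_pos hl0 (k + 1)).ne'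
  have hNne : ((N:ℝ)) ≠ 0 := Nat.cast_ne_zero.mpr hN.ne'
  have e2 : (t + 2 * π * l ^ k) / l ^ (k + 1) = t / l ^ (k + 1) + (N:ℝ) * (2 * π) := by
    rw [pow_succ] at hlk1 ⊢
    rw [hl] at hlk1 ⊢
    field_simp
  rw [e2, Real.cos_add_nat_mul_two_pi]

lemma P_periodic {h l : ℝ} (hl0 : 0 < l) {N : ℕ} (hN : 0 < N) (hl : l = 1 / N)
    (k : ℕ) (u : ℝ) :
    Function.Periodic (fun t => P h l k u t) (2 * π * l ^ k) := by
  intro t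
  simp only [P, cos_per1 hl0 k t, cos_per2 hl0 hN hl k t]

lemma Q_periodic {h l : ℝ} (hl0 : 0 < l) {N : ℕ} (hN : 0 < N) (hl : l = 1 / N) (k : ℕ) :
    Function.Periodic (fun t => Q h l k t) (2 * π * l ^ k) := by
  intro t
  simp only [Q, cos_per1 hl0 k t, cos_per2 hl0 hN hl k t]

lemma g_periodic {h l : ℝ} (hl0 : 0 < l) {N : ℕ} (hN : 0 < N) (hl : l = 1 / N)
    (k : ℕ) (u : ℝ) :
    Function.Periodic (fun t => g h l k u t) (2 * π * l ^ k) := by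
  intro t
  have hP : P h l k u (t + 2 * π * l ^ k) = P h l k u t := by
    simpa using P_periodic hl0 hN hl k u t
  simp only [g, hP]

lemma gU_periodic {h l : ℝ} (hl0 : 0 < l) {N : ℕ} (hN : 0 < N) (hl : l = 1 / N)
    (k : ℕ) (u : ℝ) :
    Function.Periodic (fun t => gU h l k u t) (2 * π * l ^ k) := by
  intro t
  have hP : P h l k u (t + 2 * π * l ^ k) = P h l k u t := by
    simpa using P_periodic hl0 hN hl k u t
  have hQ : Q h l k (t + 2 * π * l ^ k) = Q h l k t := by
    simpa using Q_periodic hl0 hN hl k t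
  simp only [gU, hP, hQ]

/-! ### Integral computations -/


lemma integral_cos_mul' {c : ℝ} (hc : c ≠ 0) (b : ℝ) :
    ∫ t in (0:ℝ)..b, Real.cos (c * t) = Real.sin (c * b) / c := by
  have := intervalIntegral.integral_comp_mul_left (a := 0) (b := b) (fun x => Real.cos x) hc
  simp only [integral_cos, mul_zero, Real.sin_zero, sub_zero, smul_eq_mul] at this
  rw [this]; field_simp

lemma integral_cos_sq' {n : ℕ} (hn : n ≠ 0) :
    ∫ t in (0:ℝ)..π, Real.cos ((n:ℝ) * t) * Real.cos ((n:ℝ) * t) = π / 2 := by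
  have h2n : ((2:ℝ) * n) ≠ 0 := by positivity
  have key : ∀ t : ℝ, Real.cos ((n:ℝ) * t) * Real.cos ((n:ℝ) * t)
      = 1 / 2 + Real.cos (2 * (n:ℝ) * t) / 2 := by
    intro t
    have h := Real.cos_sq ((n:ℝ) * t)
    rw [show 2 * (n:ℝ) * t = 2 * ((n:ℝ) * t) by ring]
    nlinarith [h]
  simp only [key]
  rw [intervalIntegral.integral_add (by apply Continuous.intervalIntegrable; continuity)
    (by apply Continuous.intervalIntegrable; continuity)]
  simp only [intervalIntegral.integral_div]
  rw [integral_cos_mul' h2n]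
  have hsin : Real.sin (2 * (n:ℝ) * π) = 0 := by
    have h := Real.sin_nat_mul_pi (2 * n)
    push_cast at h
    exact h
  rw [hsin]
  simp

lemma integral_cos_mul_cos_ne {m n : ℕ} (hm : m ≠ 0) (hn : n ≠ 0) (hmn : m ≠ n) :
    ∫ t in (0:ℝ)..π, Real.cos ((m:ℝ) * t) * Real.cos ((n:ℝ) * t) = 0 := by
  have hsub : ((m:ℝ) - n) ≠ 0 := by
    intro hc
    exact hmn (by exact_mod_cast sub_eq_zero.mp hc)
  have hadd : ((m:ℝ) + n) ≠ 0 := by positivity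
  have key : ∀ t : ℝ, Real.cos ((m:ℝ) * t) * Real.cos ((n:ℝ) * t)
      = Real.cos (((m:ℝ) - n) * t) / 2 + Real.cos (((m:ℝ) + n) * t) / 2 := by
    intro t
    rw [sub_mul, add_mul, Real.cos_sub, Real.cos_add]
    ring
  simp only [key]
  rw [intervalIntegral.integral_add (by apply Continuous.intervalIntegrable; continuity)
    (by apply Continuous.intervalIntegrable; continuity),
    intervalIntegral.integral_div, intervalIntegral.integral_div,
    integral_cos_mul' hsub, integral_cos_mul' hadd]
  have h1 : Real.sin (((m:ℝ) - n) * π) = 0 := by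
    have := Real.sin_int_mul_pi ((m:ℤ) - n)
    push_cast at this
    exact this
  have h2 : Real.sin (((m:ℝ) + n) * π) = 0 := by
    have := Real.sin_int_mul_pi ((m:ℤ) + n)
    push_cast at this
    exact this
  rw [h1, h2]
  simp

lemma periodic_est {f : ℝ → ℝ} {T M : ℝ} (hT : 0 < T) (hf : Continuous f)
    (hper : Function.Periodic f T) (hM : ∀ t, |f t| ≤ M) {x : ℝ} (hx : 0 ≤ x) :
    |(∫ t in (0:ℝ)..x, f t) - x / T * ∫ t in (0:ℝ)..T, f t| ≤ 2 * T * M := by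
  have hM0 : 0 ≤ M := le_trans (abs_nonneg _) (hM 0)
  set n : ℕ := ⌊x / T⌋₊ with hn
  have hxT : 0 ≤ x / T := div_nonneg hx hT.le
  have hn1 : (n : ℝ) ≤ x / T := Nat.floor_le hxT
  have hn2 : x / T < n + 1 := Nat.lt_floor_add_one _
  have hxeq : x / T * T = x := div_mul_cancel₀ x hT.ne'
  have hnT1 : (n : ℝ) * T ≤ x := by nlinarith
  have hnT2 : x < ((n : ℝ) + 1) * T := by nlinarith
  have hint : ∀ t₁ t₂ : ℝ, IntervalIntegrable f MeasureTheory.volume t₁ t₂ :=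
    fun t₁ t₂ => hf.intervalIntegrable _ _
  have hsplit : (∫ t in (0:ℝ)..x, f t)
      = (∫ t in (0:ℝ)..(n:ℝ) * T, f t) + ∫ t in ((n:ℝ) * T)..x, f t :=
    (intervalIntegral.integral_add_adjacent_intervals (hint _ _) (hint _ _)).symm
  have hzs : (∫ t in (0:ℝ)..(n:ℝ) * T, f t) = (n : ℝ) * ∫ t in (0:ℝ)..T, f t := by
    have := hper.intervalIntegral_add_zsmul_eq (n : ℤ) 0 hint
    simp only [zero_add, zsmul_eq_mul, Int.cast_natCast] at this
    exact this
  set I : ℝ := ∫ t in (0:ℝ)..T, f t with hI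
  have hIle : |I| ≤ T * M := by
    have := intervalIntegral.norm_integral_le_of_norm_le_const
      (C := M) (a := (0:ℝ)) (b := T) (f := f) (fun t _ => by simpa using hM t)
    simpa [hI, abs_of_pos hT, mul_comm] using this
  have hRle : |∫ t in ((n:ℝ) * T)..x, f t| ≤ T * M := by
    have h1 := intervalIntegral.norm_integral_le_of_norm_le_const
      (C := M) (a := (n:ℝ) * T) (b := x) (f := f) (fun t _ => by simpa using hM t)
    have h2 : |x - (n:ℝ) * T| ≤ T := by
      rw [abs_of_nonneg (by linarith)]; nlinarith
    calc |∫ t in ((n:ℝ) * T)..x, f t| ≤ M * |x - (n:ℝ)*T| := by simpa using h1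
      _ ≤ M * T := mul_le_mul_of_nonneg_left h2 hM0
      _ = T * M := mul_comm _ _
  have habs : |(n : ℝ) - x / T| ≤ 1 := by
    rw [abs_le]; constructor <;> linarith
  calc |(∫ t in (0:ℝ)..x, f t) - x / T * I|
      = |((n:ℝ) - x / T) * I + ∫ t in ((n:ℝ) * T)..x, f t| := by
        rw [hsplit, hzs]; ring_nf
    _ ≤ |((n:ℝ) - x / T) * I| + |∫ t in ((n:ℝ) * T)..x, f t| := abs_add_le _ _
    _ ≤ 1 * (T * M) + T * M := by
        apply add_le_add _ hRle
        rw [abs_mul]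
        exact mul_le_mul habs hIle (abs_nonneg _) one_pos.le
    _ = 2 * T * M := by ring


/-! ### Strip-level identities -/

lemma psi₁_eq {a h l : ℝ} (ha0 : 0 < a) (hl0 : 0 < l) {φ : ℝ → ℝ} {k : ℕ} (hk : k ≠ 0)
    {y : ℝ} (h1 : ySeq a k ≤ y) (h2 : y < ySeq a (k + 1)) (x : ℝ) :
    psi₁ a h l φ x y = P h l k (φ ((y - ySeq a k) / a ^ (k + 1))) x := by
  set u := φ ((y - ySeq a k) / a ^ (k + 1)) with hu
  have heq : (fun t => psi a h l φ t y)
      = fun t => (1 - u) * fSeq h l k t + u * fSeq h l (k + 1) t :=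
    funext fun t => psi_eq ha0 h1 h2 t
  rw [psi₁, heq]
  exact (hasDerivAt_P_t hl0 hk u x).deriv

lemma hasDerivAt_w {φ : ℝ → ℝ} (hφ : Differentiable ℝ φ) (c d y : ℝ) :
    HasDerivAt (fun s => φ ((s - c) / d)) (deriv φ ((y - c) / d) / d) y := by
  have h1 : HasDerivAt (fun s : ℝ => (s - c) / d) (1 / d) y := by
    simpa using ((hasDerivAt_id y).sub_const c).div_const d
  have h2 := ((hφ ((y - c) / d)).hasDerivAt).comp y h1
  refine h2.congr_deriv ?_
  ring

lemma psi₂_eq {a h l : ℝ} (ha0 : 0 < a) {φ : ℝ → ℝ} (hφ : Differentiable ℝ φ) {k : ℕ}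
    {y : ℝ} (h1 : ySeq a k < y) (h2 : y < ySeq a (k + 1)) (x : ℝ) :
    psi₂ a h l φ x y = deriv φ ((y - ySeq a k) / a ^ (k + 1)) / a ^ (k + 1)
      * (fSeq h l (k + 1) x - fSeq h l k x) := by
  have hmem : Set.Ioo (ySeq a k) (ySeq a (k + 1)) ∈ 𝓝 y :=
    isOpen_Ioo.mem_nhds ⟨h1, h2⟩
  have heq : (fun s => psi a h l φ x s) =ᶠ[𝓝 y]
      fun s => (1 - φ ((s - ySeq a k) / a ^ (k + 1))) * fSeq h l k x
        + φ ((s - ySeq a k) / a ^ (k + 1)) * fSeq h l (k + 1) x := by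
    filter_upwards [hmem] with s hs
    exact psi_eq ha0 hs.1.le hs.2 x
  have hd : HasDerivAt (fun s => (1 - φ ((s - ySeq a k) / a ^ (k + 1))) * fSeq h l k x
        + φ ((s - ySeq a k) / a ^ (k + 1)) * fSeq h l (k + 1) x)
      (deriv φ ((y - ySeq a k) / a ^ (k + 1)) / a ^ (k + 1)
        * (fSeq h l (k + 1) x - fSeq h l k x)) y := by
    have hw := hasDerivAt_w hφ (ySeq a k) (a ^ (k + 1)) y
    have h3 : HasDerivAt (fun s => fSeq h l k x + φ ((s - ySeq a k) / a ^ (k + 1))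
        * (fSeq h l (k + 1) x - fSeq h l k x))
        (deriv φ ((y - ySeq a k) / a ^ (k + 1)) / a ^ (k + 1)
          * (fSeq h l (k + 1) x - fSeq h l k x)) y := by
      simpa using (hw.mul_const (fSeq h l (k + 1) x - fSeq h l k x))
    have heq2 : (fun s => (1 - φ ((s - ySeq a k) / a ^ (k + 1))) * fSeq h l k x
        + φ ((s - ySeq a k) / a ^ (k + 1)) * fSeq h l (k + 1) x)
        = fun s => fSeq h l k x + φ ((s - ySeq a k) / a ^ (k + 1))
          * (fSeq h l (k + 1) x - fSeq h l k x) := by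
      funext s; ring
    rw [heq2]
    exact h3
  rw [psi₂, heq.deriv_eq, hd.deriv]

lemma arc_eq {a h l : ℝ} (ha0 : 0 < a) (hl0 : 0 < l) {φ : ℝ → ℝ} {k : ℕ} (hk : k ≠ 0)
    {y : ℝ} (h1 : ySeq a k ≤ y) (h2 : y < ySeq a (k + 1)) (x : ℝ) :
    arc a h l φ x y = ∫ t in (0:ℝ)..x, g h l k (φ ((y - ySeq a k) / a ^ (k + 1))) t := by
  rw [arc]
  apply intervalIntegral.integral_congr
  intro t _
  show Real.sqrt (1 + psi₁ a h l φ t y ^ 2) = _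
  rw [psi₁_eq ha0 hl0 hk h1 h2 t, g]

lemma hasDerivAt_G {h l : ℝ} (hh0 : 0 < h) (hl0 : 0 < l) (k : ℕ) (x u : ℝ) :
    HasDerivAt (fun v => ∫ t in (0:ℝ)..x, g h l k v t)
      (∫ t in (0:ℝ)..x, gU h l k u t) u := by
  have hb := intervalIntegral.hasDerivAt_integral_of_dominated_loc_of_deriv_le
    (𝕜 := ℝ) (μ := volume) (F := fun v t => g h l k v t) (F' := fun v t => gU h l k v t)
    (x₀ := u) (s := Metric.ball u 1) (a := 0) (b := x)
    (bound := fun _ => (h / l) ^ k + (h / l) ^ (k + 1)) (Metric.ball_mem_nhds u one_pos)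
    (Eventually.of_forall fun v => (g_cont h l k v).aestronglyMeasurable)
    ((g_cont h l k u).intervalIntegrable _ _)
    (gU_cont h l k u).aestronglyMeasurable
    (Eventually.of_forall fun t _ => fun v _ => by
      rw [Real.norm_eq_abs]; exact abs_gU_le hh0 hl0 k v t)
    (intervalIntegrable_const)
    (Eventually.of_forall fun t _ => fun v _ => hasDerivAt_g_u k v t)
  exact hb.2

lemma hasDerivAt_arc {a h l : ℝ} (ha0 : 0 < a) (hh0 : 0 < h) (hl0 : 0 < l) {φ : ℝ → ℝ}
    (hφ : Differentiable ℝ φ) {k : ℕ} (hk : k ≠ 0) {y : ℝ}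
    (h1 : ySeq a k < y) (h2 : y < ySeq a (k + 1)) (x : ℝ) :
    HasDerivAt (fun s => arc a h l φ x s)
      ((∫ t in (0:ℝ)..x, gU h l k (φ ((y - ySeq a k) / a ^ (k + 1))) t)
        * (deriv φ ((y - ySeq a k) / a ^ (k + 1)) / a ^ (k + 1))) y := by
  set u := φ ((y - ySeq a k) / a ^ (k + 1)) with hu
  have hmem : Set.Ioo (ySeq a k) (ySeq a (k + 1)) ∈ 𝓝 y :=
    isOpen_Ioo.mem_nhds ⟨h1, h2⟩
  have heq : (fun s => arc a h l φ x s) =ᶠ[𝓝 y]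
      (fun v => ∫ t in (0:ℝ)..x, g h l k v t) ∘ (fun s => φ ((s - ySeq a k) / a ^ (k + 1))) := by
    filter_upwards [hmem] with s hs
    exact arc_eq ha0 hl0 hk hs.1.le hs.2 x
  have hG := hasDerivAt_G hh0 hl0 k x u
  have hw := hasDerivAt_w hφ (ySeq a k) (a ^ (k + 1)) y
  have hcomp := hG.comp y hw
  exact hcomp.congr_of_eventuallyEq heq

/-! ### Lower bound for the length -/

lemma freq_eq {l : ℝ} {N : ℕ} (hN : 0 < N) (hl : l = 1 / N) (k : ℕ) (t : ℝ) :
    t / l ^ k = ((N ^ k : ℕ) : ℝ) * t := by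
  have hNne : ((N:ℝ)) ≠ 0 := Nat.cast_ne_zero.mpr hN.ne'
  subst hl
  push_cast
  rw [one_div, inv_pow, div_inv_eq_mul]
  ring

lemma integral_P_cos₁ {h l : ℝ} (hl0 : 0 < l) {N : ℕ} (hN2 : 1 < N) (hl : l = 1 / N)
    (k : ℕ) (u : ℝ) :
    ∫ t in (0:ℝ)..π, P h l k u t * Real.cos (t / l ^ k)
      = (1 - u) * (h / l) ^ k * (π / 2) := by
  have hN : 0 < N := lt_trans one_pos hN2
  have hkne : (N ^ k : ℕ) ≠ 0 := (Nat.pow_pos (n := k) hN).ne'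
  have hk1ne : (N ^ (k + 1) : ℕ) ≠ 0 := (Nat.pow_pos (n := k + 1) hN).ne'
  have hne : (N ^ (k + 1) : ℕ) ≠ (N ^ k : ℕ) :=
    Nat.ne_of_gt (Nat.pow_lt_pow_right hN2 (Nat.lt_succ_self k))
  have heq : (fun t => P h l k u t * Real.cos (t / l ^ k))
      = fun t => (1 - u) * (h / l) ^ k
          * (Real.cos (((N ^ k : ℕ) : ℝ) * t) * Real.cos (((N ^ k : ℕ) : ℝ) * t))
        + u * (h / l) ^ (k + 1)
          * (Real.cos (((N ^ (k + 1) : ℕ) : ℝ) * t) * Real.cos (((N ^ k : ℕ) : ℝ) * t)) := by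
    funext t
    rw [P, freq_eq hN hl k t, freq_eq hN hl (k + 1) t]
    ring
  rw [heq, intervalIntegral.integral_add
      (by apply Continuous.intervalIntegrable; fun_prop)
      (by apply Continuous.intervalIntegrable; fun_prop),
    intervalIntegral.integral_const_mul, intervalIntegral.integral_const_mul,
    integral_cos_sq' hkne, integral_cos_mul_cos_ne hk1ne hkne hne]
  ring

lemma integral_P_cos₂ {h l : ℝ} (hl0 : 0 < l) {N : ℕ} (hN2 : 1 < N) (hl : l = 1 / N)
    (k : ℕ) (u : ℝ) :
    ∫ t in (0:ℝ)..π, P h l k u t * Real.cos (t / l ^ (k + 1))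
      = u * (h / l) ^ (k + 1) * (π / 2) := by
  have hN : 0 < N := lt_trans one_pos hN2
  have hkne : (N ^ k : ℕ) ≠ 0 := (Nat.pow_pos (n := k) hN).ne'
  have hk1ne : (N ^ (k + 1) : ℕ) ≠ 0 := (Nat.pow_pos (n := k + 1) hN).ne'
  have hne : (N ^ k : ℕ) ≠ (N ^ (k + 1) : ℕ) :=
    Nat.ne_of_lt (Nat.pow_lt_pow_right hN2 (Nat.lt_succ_self k))
  have heq : (fun t => P h l k u t * Real.cos (t / l ^ (k + 1)))
      = fun t => (1 - u) * (h / l) ^ k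
          * (Real.cos (((N ^ k : ℕ) : ℝ) * t) * Real.cos (((N ^ (k + 1) : ℕ) : ℝ) * t))
        + u * (h / l) ^ (k + 1)
          * (Real.cos (((N ^ (k + 1) : ℕ) : ℝ) * t) * Real.cos (((N ^ (k + 1) : ℕ) : ℝ) * t)) := by
    funext t
    rw [P, freq_eq hN hl k t, freq_eq hN hl (k + 1) t]
    ring
  rw [heq, intervalIntegral.integral_add
      (by apply Continuous.intervalIntegrable; fun_prop)
      (by apply Continuous.intervalIntegrable; fun_prop),
    intervalIntegral.integral_const_mul, intervalIntegral.integral_const_mul,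
    integral_cos_sq' hk1ne, integral_cos_mul_cos_ne hkne hk1ne hne]
  ring

lemma len_lower {a h l : ℝ} (ha0 : 0 < a) (hh0 : 0 < h) (hl0 : 0 < l) (hl1 : l < 1)
    (hlh : l < h) {N : ℕ} (hN : 0 < N) (hl : l = 1 / N) {φ : ℝ → ℝ}
    (hφ01 : ∀ t, φ t ∈ Set.Icc (0:ℝ) 1) {k : ℕ} (hk : k ≠ 0) {y : ℝ}
    (h1 : ySeq a k ≤ y) (h2 : y < ySeq a (k + 1)) :
    π / 4 * (h / l) ^ k ≤ len a h l φ y := by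
  have hN2 : 1 < N := by
    rcases Nat.lt_or_ge 1 N with hN2 | hle
    · exact hN2
    · exfalso
      have hN1 : N = 1 := le_antisymm hle hN
      rw [hN1] at hl
      simp at hl
      rw [hl] at hl1
      exact absurd hl1 (lt_irrefl _)
  set u := φ ((y - ySeq a k) / a ^ (k + 1)) with hudef
  have hu : u ∈ Set.Icc (0:ℝ) 1 := hφ01 _
  have hr1 : (1:ℝ) < h / l := (one_lt_div hl0).mpr hlh
  have hA : (0:ℝ) < (h / l) ^ k := pow_pos (lt_trans one_pos hr1) k
  have hAB : (h / l) ^ k ≤ (h / l) ^ (k + 1) :=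
    pow_le_pow_right₀ hr1.le (Nat.le_succ k)
  have hlen : len a h l φ y = ∫ t in (0:ℝ)..π, g h l k u t := by
    rw [len]; exact arc_eq ha0 hl0 hk h1 h2 π
  -- `∫ |P| ≤ ∫ g`
  have habsint : IntervalIntegrable (fun t => |P h l k u t|) volume 0 π :=
    ((P_cont h l k u).abs).intervalIntegrable _ _
  have hstep1 : (∫ t in (0:ℝ)..π, |P h l k u t|) ≤ ∫ t in (0:ℝ)..π, g h l k u t := by
    apply intervalIntegral.integral_mono_on Real.pi_pos.le habsint
      ((g_cont h l k u).intervalIntegrable _ _)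
    intro t _
    rw [g]
    exact abs_le_sqrt_one_add_sq _
  -- projections
  have hproj : ∀ m : ℕ, (|∫ t in (0:ℝ)..π, P h l k u t * Real.cos (t / l ^ m)|)
      ≤ ∫ t in (0:ℝ)..π, |P h l k u t| := by
    intro m
    calc |∫ t in (0:ℝ)..π, P h l k u t * Real.cos (t / l ^ m)|
        ≤ ∫ t in (0:ℝ)..π, |P h l k u t * Real.cos (t / l ^ m)| :=
          intervalIntegral.abs_integral_le_integral_abs Real.pi_pos.le
      _ ≤ ∫ t in (0:ℝ)..π, |P h l k u t| := by
          apply intervalIntegral.integral_mono_on Real.pi_pos.le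
            (((P_cont h l k u).mul (by fun_prop)).abs.intervalIntegrable _ _) habsint
          intro t _
          rw [Pi.mul_apply, abs_mul]
          calc |P h l k u t| * |Real.cos (t / l ^ m)| ≤ |P h l k u t| * 1 :=
                mul_le_mul_of_nonneg_left (Real.abs_cos_le_one _) (abs_nonneg _)
            _ = |P h l k u t| := mul_one _
  rcases le_or_gt u (1 / 2) with hcase | hcase
  · have hval := integral_P_cos₁ (h := h) hl0 hN2 hl k u
    have h12 : (1:ℝ) / 2 ≤ 1 - u := by linarith
    have hnn : 0 ≤ (1 - u) * (h / l) ^ k * (π / 2) :=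
      mul_nonneg (mul_nonneg (by linarith [hu.2]) hA.le) (by positivity)
    calc π / 4 * (h / l) ^ k = 1 / 2 * (h / l) ^ k * (π / 2) := by ring
      _ ≤ (1 - u) * (h / l) ^ k * (π / 2) :=
          mul_le_mul_of_nonneg_right (mul_le_mul_of_nonneg_right h12 hA.le) (by positivity)
      _ = |(1 - u) * (h / l) ^ k * (π / 2)| := (abs_of_nonneg hnn).symm
      _ = |∫ t in (0:ℝ)..π, P h l k u t * Real.cos (t / l ^ k)| := by rw [hval]
      _ ≤ ∫ t in (0:ℝ)..π, |P h l k u t| := hproj k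
      _ ≤ ∫ t in (0:ℝ)..π, g h l k u t := hstep1
      _ = len a h l φ y := hlen.symm
  · have hval := integral_P_cos₂ (h := h) hl0 hN2 hl k u
    have hnn : 0 ≤ u * (h / l) ^ (k + 1) * (π / 2) :=
      mul_nonneg (mul_nonneg hu.1 (pow_nonneg (by positivity) _)) (by positivity)
    calc π / 4 * (h / l) ^ k = 1 / 2 * (h / l) ^ k * (π / 2) := by ring
      _ ≤ u * (h / l) ^ (k + 1) * (π / 2) :=
          mul_le_mul_of_nonneg_right
            (mul_le_mul hcase.le hAB hA.le (le_trans (by norm_num) hcase.le)) (by positivity)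
      _ = |u * (h / l) ^ (k + 1) * (π / 2)| := (abs_of_nonneg hnn).symm
      _ = |∫ t in (0:ℝ)..π, P h l k u t * Real.cos (t / l ^ (k + 1))| := by rw [hval]
      _ ≤ ∫ t in (0:ℝ)..π, |P h l k u t| := hproj (k + 1)
      _ ≤ ∫ t in (0:ℝ)..π, g h l k u t := hstep1
      _ = len a h l φ y := hlen.symm

lemma len_pos {a h l : ℝ} (ha0 : 0 < a) (hh0 : 0 < h) (hl0 : 0 < l) (hl1 : l < 1)
    (hlh : l < h) {N : ℕ} (hN : 0 < N) (hl : l = 1 / N) {φ : ℝ → ℝ}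
    (hφ01 : ∀ t, φ t ∈ Set.Icc (0:ℝ) 1) {k : ℕ} (hk : k ≠ 0) {y : ℝ}
    (h1 : ySeq a k ≤ y) (h2 : y < ySeq a (k + 1)) : 0 < len a h l φ y := by
  have := len_lower ha0 hh0 hl0 hl1 hlh hN hl hφ01 hk h1 h2
  have hr1 : (1:ℝ) < h / l := (one_lt_div hl0).mpr hlh
  nlinarith [pow_pos (lt_trans one_pos hr1) k, Real.pi_pos]


lemma cancel_est {T Mf Mg x L Lx Dx Dπ I J : ℝ}
    (hT : 0 < T) (hMf : 0 ≤ Mf) (hMg : 0 ≤ Mg) (hx0 : 0 ≤ x) (hxπ : x ≤ π)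
    (hI : |I| ≤ T * Mf)
    (e1 : |Dx - x / T * I| ≤ 2 * T * Mf) (e2 : |Dπ - π / T * I| ≤ 2 * T * Mf)
    (e3 : |Lx - x / T * J| ≤ 2 * T * Mg) (e4 : |L - π / T * J| ≤ 2 * T * Mg)
    (hL : |L| ≤ π * Mg) (hLx : |Lx| ≤ π * Mg) :
    |L * Dx - Lx * Dπ| ≤ 8 * π * T * Mf * Mg := by
  have hπ := Real.pi_pos
  have hid : L * Dx - Lx * Dπ
      = I / T * (x * (L - π / T * J) - π * (Lx - x / T * J))
        + L * (Dx - x / T * I) - Lx * (Dπ - π / T * I) := by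
    field_simp
    ring
  have n1 : |x * (L - π / T * J)| ≤ π * (2 * T * Mg) := by
    rw [abs_mul]
    exact mul_le_mul (by rw [abs_of_nonneg hx0]; exact hxπ) e4 (abs_nonneg _) hπ.le
  have n2 : |π * (Lx - x / T * J)| ≤ π * (2 * T * Mg) := by
    rw [abs_mul]
    exact mul_le_mul (le_of_eq (abs_of_pos hπ)) e3 (abs_nonneg _) hπ.le
  have hin : |x * (L - π / T * J) - π * (Lx - x / T * J)| ≤ 4 * π * T * Mg := by
    have := abs_sub (x * (L - π / T * J)) (π * (Lx - x / T * J))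
    linarith
  have hIT : |I / T| ≤ Mf := by
    rw [abs_div, abs_of_pos hT, div_le_iff₀ hT]
    linarith
  have habs1 : |I / T * (x * (L - π / T * J) - π * (Lx - x / T * J))|
      ≤ Mf * (4 * π * T * Mg) := by
    rw [abs_mul]
    exact mul_le_mul hIT hin (abs_nonneg _) hMf
  have habs2 : |L * (Dx - x / T * I)| ≤ π * Mg * (2 * T * Mf) := by
    rw [abs_mul]
    exact mul_le_mul hL e1 (abs_nonneg _) (by positivity)
  have habs3 : |Lx * (Dπ - π / T * I)| ≤ π * Mg * (2 * T * Mf) := by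
    rw [abs_mul]
    exact mul_le_mul hLx e2 (abs_nonneg _) (by positivity)
  rw [hid]
  have t1 := abs_sub (I / T * (x * (L - π / T * J) - π * (Lx - x / T * J))
      + L * (Dx - x / T * I)) (Lx * (Dπ - π / T * I))
  have t2 := abs_add_le (I / T * (x * (L - π / T * J) - π * (Lx - x / T * J)))
      (L * (Dx - x / T * I))
  nlinarith [habs1, habs2, habs3, t1, t2]


set_option maxHeartbeats 1000000 in
lemma strip_bounds {a h l : ℝ} (ha0 : 0 < a) (ha1 : a < 1) (hh0 : 0 < h) (hh1 : h < 1)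
    (hl0 : 0 < l) (hl1 : l < 1) {N : ℕ} (hN : 0 < N) (hlN : l = 1 / N)
    {φ : ℝ → ℝ} (hφ : Differentiable ℝ φ) (hφ01 : ∀ t, φ t ∈ Set.Icc (0:ℝ) 1)
    (hφd0 : ∀ t, 0 ≤ deriv φ t) (hφd2 : ∀ t, deriv φ t ≤ 2)
    (hla : l < a) (hlh : l < h)
    {k : ℕ} (hk : k ≠ 0) {y : ℝ} (h1 : ySeq a k < y) (h2 : y < ySeq a (k + 1))
    {x : ℝ} (hx0 : 0 < x) (hxπ : x < π) :
    1 / len a h l φ y ≤ 4 / π * (l / h) ^ k ∧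
    |psi₁ a h l φ x y * psi₂ a h l φ x y| /
        (Real.sqrt (1 + psi₁ a h l φ x y ^ 2 + psi₂ a h l φ x y ^ 2) * len a h l φ y)
      ≤ 16 / (π * a) * (l / a) ^ k ∧
    |len a h l φ y * deriv (fun s => arc a h l φ x s) y
        - arc a h l φ x y * deriv (len a h l φ) y| / len a h l φ y ^ 2
      ≤ 3072 * (h / l) ^ 2 / a * (l / a) ^ k := by
  have hπ := Real.pi_pos
  set u := φ ((y - ySeq a k) / a ^ (k + 1)) with hudef
  have hu : u ∈ Set.Icc (0:ℝ) 1 := hφ01 _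
  have hr1 : (1:ℝ) < h / l := (one_lt_div hl0).mpr hlh
  have hr0 : (0:ℝ) < h / l := lt_trans one_pos hr1
  have hA : (0:ℝ) < (h / l) ^ k := pow_pos hr0 k
  have hB : (0:ℝ) < (h / l) ^ (k + 1) := pow_pos hr0 (k + 1)
  have hB1 : (1:ℝ) ≤ (h / l) ^ (k + 1) := one_le_pow₀ hr1.le
  have hAB : (h / l) ^ k ≤ (h / l) ^ (k + 1) := pow_le_pow_right₀ hr1.le (Nat.le_succ k)
  have hak : (0:ℝ) < a ^ (k + 1) := pow_pos ha0 (k + 1)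
  have hlen_lb : π / 4 * (h / l) ^ k ≤ len a h l φ y :=
    len_lower ha0 hh0 hl0 hl1 hlh hN hlN hφ01 hk h1.le h2
  have hlenpos : (0:ℝ) < len a h l φ y := by nlinarith
  set d := deriv φ ((y - ySeq a k) / a ^ (k + 1)) / a ^ (k + 1) with hddef
  have habs_d : |d| ≤ 2 / a ^ (k + 1) := by
    rw [hddef, abs_div, abs_of_pos hak]
    gcongr
    exact abs_le.mpr ⟨by linarith [hφd0 ((y - ySeq a k) / a ^ (k + 1))],
      hφd2 ((y - ySeq a k) / a ^ (k + 1))⟩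
  -- Part (a)
  have parta : 1 / len a h l φ y ≤ 4 / π * (l / h) ^ k := by
    have hprod : (l / h) ^ k * (h / l) ^ k = 1 := by
      rw [← mul_pow]
      rw [show l / h * (h / l) = 1 by field_simp]
      exact one_pow k
    have hCpos : (0:ℝ) < 4 / π * (l / h) ^ k := by positivity
    rw [div_le_iff₀ hlenpos]
    have hone : 4 / π * (l / h) ^ k * (π / 4 * (h / l) ^ k) = (l / h) ^ k * (h / l) ^ k := by
      field_simp
    calc (1:ℝ) = 4 / π * (l / h) ^ k * (π / 4 * (h / l) ^ k) := by rw [hone, hprod]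
      _ ≤ 4 / π * (l / h) ^ k * len a h l φ y :=
          mul_le_mul_of_nonneg_left hlen_lb hCpos.le
  refine ⟨parta, ?_, ?_⟩
  · -- Part (b)
    have hψ₂ : psi₂ a h l φ x y = d * (fSeq h l (k + 1) x - fSeq h l k x) :=
      psi₂_eq ha0 hφ h1 h2 x
    have hfk : ∀ m : ℕ, m ≠ 0 → |fSeq h l m x| ≤ h ^ m := by
      intro m hm
      rw [fSeq, if_neg hm, abs_mul, abs_of_pos (pow_pos hh0 m)]
      calc h ^ m * |Real.sin (x / l ^ m)| ≤ h ^ m * 1 :=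
            mul_le_mul_of_nonneg_left (Real.abs_sin_le_one _) (pow_pos hh0 m).le
        _ = h ^ m := mul_one _
    have hhk1 : h ^ (k + 1) ≤ h ^ k := pow_le_pow_of_le_one hh0.le hh1.le (Nat.le_succ k)
    have habsψ₂ : |psi₂ a h l φ x y| ≤ 2 / a ^ (k + 1) * (2 * h ^ k) := by
      rw [hψ₂, abs_mul]
      apply mul_le_mul habs_d ?_ (abs_nonneg _) (by positivity)
      calc |fSeq h l (k + 1) x - fSeq h l k x|
          ≤ |fSeq h l (k + 1) x| + |fSeq h l k x| := abs_sub _ _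
        _ ≤ h ^ (k + 1) + h ^ k := add_le_add (hfk _ (Nat.succ_ne_zero k)) (hfk _ hk)
        _ ≤ 2 * h ^ k := by linarith
    set S := Real.sqrt (1 + psi₁ a h l φ x y ^ 2 + psi₂ a h l φ x y ^ 2) with hSdef
    have hSpos : 0 < S := Real.sqrt_pos.mpr (by positivity)
    have hS₁ : |psi₁ a h l φ x y| ≤ S := by
      rw [hSdef, ← Real.sqrt_sq_eq_abs]
      exact Real.sqrt_le_sqrt (by nlinarith [sq_nonneg (psi₂ a h l φ x y)])
    have hnum : |psi₁ a h l φ x y * psi₂ a h l φ x y| ≤ S * |psi₂ a h l φ x y| := by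
      rw [abs_mul]
      exact mul_le_mul_of_nonneg_right hS₁ (abs_nonneg _)
    calc |psi₁ a h l φ x y * psi₂ a h l φ x y| / (S * len a h l φ y)
        ≤ S * |psi₂ a h l φ x y| / (S * len a h l φ y) :=
          by gcongr <;> first | exact hnum | positivity
      _ = |psi₂ a h l φ x y| / len a h l φ y := by
          rw [mul_div_mul_left _ _ hSpos.ne']
      _ ≤ (2 / a ^ (k + 1) * (2 * h ^ k)) / (π / 4 * (h / l) ^ k) :=
          div_le_div₀ (by positivity) habsψ₂ (by positivity) hlen_lb
      _ = 16 / (π * a) * (l / a) ^ k := by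
          rw [div_pow, div_pow]
          field_simp
          ring
  · -- Part (c)
    set T := 2 * π * l ^ k with hTdef
    have hT : 0 < T := by positivity
    set Mf := ((h / l) ^ k + (h / l) ^ (k + 1)) * (2 / a ^ (k + 1)) with hMfdef
    set Mg := 1 + ((h / l) ^ k + (h / l) ^ (k + 1)) with hMgdef
    have hMf0 : 0 ≤ Mf := by positivity
    have hMg0 : 0 ≤ Mg := by positivity
    set f := fun t => gU h l k u t * d with hfdef
    have hfcont : Continuous f := (gU_cont h l k u).mul continuous_const
    have hfper : Function.Periodic f T := by
      intro t
      have hgUp : gU h l k u (t + T) = gU h l k u t := by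
        simpa using gU_periodic hl0 hN hlN k u t
      simp only [hfdef, hgUp]
    have hfabs : ∀ t, |f t| ≤ Mf := by
      intro t
      rw [hfdef, abs_mul, hMfdef]
      exact mul_le_mul (abs_gU_le hh0 hl0 k u t) habs_d (abs_nonneg _) (by positivity)
    have hgper : Function.Periodic (fun t => g h l k u t) T := g_periodic hl0 hN hlN k u
    have hgabs : ∀ t, |g h l k u t| ≤ Mg := by
      intro t
      rw [abs_of_nonneg (g_nonneg h l k u t)]
      exact g_le hh0 hl0 k hu t
    have pe1 := periodic_est hT hfcont hfper hfabs hx0.le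
    have pe2 := periodic_est hT hfcont hfper hfabs Real.pi_pos.le
    have pe3 := periodic_est hT (g_cont h l k u) hgper hgabs hx0.le
    have pe4 := periodic_est hT (g_cont h l k u) hgper hgabs Real.pi_pos.le
    have hI : |∫ t in (0:ℝ)..T, f t| ≤ T * Mf := by
      have := intervalIntegral.norm_integral_le_of_norm_le_const
        (C := Mf) (a := (0:ℝ)) (b := T) (f := f) (fun t _ => by simpa using hfabs t)
      simpa [abs_of_pos hT, mul_comm] using this
    have hLbd : |∫ t in (0:ℝ)..π, g h l k u t| ≤ π * Mg := by
      have := intervalIntegral.norm_integral_le_of_norm_le_const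
        (C := Mg) (a := (0:ℝ)) (b := π) (f := fun t => g h l k u t)
        (fun t _ => by simpa using hgabs t)
      simpa [abs_of_pos hπ, mul_comm] using this
    have hLxbd : |∫ t in (0:ℝ)..x, g h l k u t| ≤ π * Mg := by
      have := intervalIntegral.norm_integral_le_of_norm_le_const
        (C := Mg) (a := (0:ℝ)) (b := x) (f := fun t => g h l k u t)
        (fun t _ => by simpa using hgabs t)
      rw [Real.norm_eq_abs] at this
      calc |∫ t in (0:ℝ)..x, g h l k u t| ≤ Mg * |x - 0| := this
        _ = Mg * x := by rw [sub_zero, abs_of_pos hx0]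
        _ ≤ Mg * π := mul_le_mul_of_nonneg_left hxπ.le hMg0
        _ = π * Mg := mul_comm _ _
    have hDx : deriv (fun s => arc a h l φ x s) y = ∫ t in (0:ℝ)..x, f t := by
      rw [(hasDerivAt_arc ha0 hh0 hl0 hφ hk h1 h2 x).deriv, hfdef,
        intervalIntegral.integral_mul_const]
    have hDπ : deriv (len a h l φ) y = ∫ t in (0:ℝ)..π, f t := by
      have hle : len a h l φ = fun s => arc a h l φ π s := rfl
      rw [hle, (hasDerivAt_arc ha0 hh0 hl0 hφ hk h1 h2 π).deriv, hfdef,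
        intervalIntegral.integral_mul_const]
    have hLeq : len a h l φ y = ∫ t in (0:ℝ)..π, g h l k u t := by
      rw [len]; exact arc_eq ha0 hl0 hk h1.le h2 π
    have hLxeq : arc a h l φ x y = ∫ t in (0:ℝ)..x, g h l k u t := by
      exact arc_eq ha0 hl0 hk h1.le h2 x
    have hcancel : |len a h l φ y * deriv (fun s => arc a h l φ x s) y
        - arc a h l φ x y * deriv (len a h l φ) y| ≤ 8 * π * T * Mf * Mg := by
      rw [hDx, hDπ, hLeq, hLxeq]
      exact cancel_est hT hMf0 hMg0 hx0.le hxπ.le hI pe1 pe2 pe3 pe4 hLbd hLxbd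
    have hc2 : 8 * π * T * Mf * Mg
        ≤ 8 * π * T * (4 * (h / l) ^ (k + 1) / a ^ (k + 1)) * (3 * (h / l) ^ (k + 1)) := by
      have hMf' : Mf ≤ 4 * (h / l) ^ (k + 1) / a ^ (k + 1) := by
        rw [hMfdef]
        calc ((h / l) ^ k + (h / l) ^ (k + 1)) * (2 / a ^ (k + 1))
            ≤ (2 * (h / l) ^ (k + 1)) * (2 / a ^ (k + 1)) :=
              mul_le_mul_of_nonneg_right (by linarith) (by positivity)
          _ = 4 * (h / l) ^ (k + 1) / a ^ (k + 1) := by ring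
      have hMg' : Mg ≤ 3 * (h / l) ^ (k + 1) := by
        rw [hMgdef]; linarith
      exact mul_le_mul (mul_le_mul_of_nonneg_left hMf' (by positivity)) hMg' hMg0
        (by positivity)
    have hden : (π / 4 * (h / l) ^ k) ^ 2 ≤ len a h l φ y ^ 2 := by
      apply pow_le_pow_left₀ (by positivity) hlen_lb
    calc |len a h l φ y * deriv (fun s => arc a h l φ x s) y
        - arc a h l φ x y * deriv (len a h l φ) y| / len a h l φ y ^ 2
        ≤ (8 * π * T * (4 * (h / l) ^ (k + 1) / a ^ (k + 1)) * (3 * (h / l) ^ (k + 1)))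
          / (π / 4 * (h / l) ^ k) ^ 2 :=
          div_le_div₀ (by positivity) (hcancel.trans hc2) (by positivity) hden
      _ = 3072 * (h / l) ^ 2 / a * (l / a) ^ k := by
          have e1 : (l / a) ^ k = l ^ k / a ^ k := div_pow l a k
          have hXk : ((h / l) ^ k) ≠ 0 := hA.ne'
          have hakk : (a ^ k) ≠ 0 := (pow_pos ha0 k).ne'
          rw [hTdef, e1, pow_succ (h / l) k, pow_succ a k]
          field_simp
          ring

lemma ySeq_strictMono {a : ℝ} (ha0 : 0 < a) : StrictMono (ySeq a) :=
  strictMono_nat_of_lt_succ fun n => by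
    rw [ySeq_succ]; nlinarith [pow_pos ha0 (n + 1)]

lemma ySeq_nonneg {a : ℝ} (ha0 : 0 < a) (k : ℕ) : 0 ≤ ySeq a k :=
  Finset.sum_nonneg fun j _ => (pow_pos ha0 (j + 1)).le

/-- Assume `λ < a` and `λ < h`. The three coefficients of the pulled-back `1`-form
`ω_M = π^*(du)` in an orthonormal tangent frame of the graph of `ψ` all tend to `0`
uniformly in `x` as `y → y_∞`: `1/L(y)`, the mixed term
`|∂₁ψ ∂₂ψ| / (√(1 + ∂₁ψ² + ∂₂ψ²) L(y))`, and the cancellation term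
`|L(y) ∂_y L(x,y) - L(x,y) ∂_y L(y)|/L(y)²`. -/
theorem form_coefficients_tendto_zero (a h l : ℝ) (ha0 : 0 < a) (ha1 : a < 1) (hh0 : 0 < h) (hh1 : h < 1)
    (hl0 : 0 < l) (hl1 : l < 1) (hlN : ∃ N : ℕ, 0 < N ∧ l = 1 / N)
    (φ : ℝ → ℝ) (hφsmooth : ContDiff ℝ (⊤ : ℕ∞) φ) (hφmono : Monotone φ)
    (hφ01 : ∀ t, φ t ∈ Set.Icc (0:ℝ) 1)
    (hφd0 : ∀ t, 0 ≤ deriv φ t) (hφd2 : ∀ t, deriv φ t ≤ 2)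
    (hφ0 : ∃ ε > 0, ∀ t < ε, φ t = 0) (hφ1 : ∃ ε > 0, ∀ t > 1 - ε, φ t = 1)
    (hla : l < a) (hlh : l < h) :
    ∀ ε : ℝ, 0 < ε → ∃ y' : ℝ, y' < yInf a ∧
      ∀ y : ℝ, y' < y → y < yInf a → (∀ k : ℕ, y ≠ ySeq a k) →
        ∀ x : ℝ, 0 < x → x < π →
          1 / len a h l φ y < ε ∧
          |psi₁ a h l φ x y * psi₂ a h l φ x y| /
              (Real.sqrt (1 + psi₁ a h l φ x y ^ 2 + psi₂ a h l φ x y ^ 2)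
                * len a h l φ y) < ε ∧
          |len a h l φ y * deriv (fun s => arc a h l φ x s) y
              - arc a h l φ x y * deriv (len a h l φ) y| / len a h l φ y ^ 2 < ε := by
  intro ε hε
  obtain ⟨N, hNpos, hlNeq⟩ := hlN
  have hφdiff : Differentiable ℝ φ := hφsmooth.differentiable (by simp)
  have hlh' : l / h < 1 := (div_lt_one hh0).mpr hlh
  have hla' : l / a < 1 := (div_lt_one ha0).mpr hla
  have hb1 : Tendsto (fun k : ℕ => 4 / π * (l / h) ^ k) atTop (𝓝 0) := by
    simpa using (tendsto_pow_atTop_nhds_zero_of_lt_one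
      (div_nonneg hl0.le hh0.le) hlh').const_mul (4 / π)
  have hb2 : Tendsto (fun k : ℕ => 16 / (π * a) * (l / a) ^ k) atTop (𝓝 0) := by
    simpa using (tendsto_pow_atTop_nhds_zero_of_lt_one
      (div_nonneg hl0.le ha0.le) hla').const_mul (16 / (π * a))
  have hb3 : Tendsto (fun k : ℕ => 3072 * (h / l) ^ 2 / a * (l / a) ^ k) atTop (𝓝 0) := by
    simpa using (tendsto_pow_atTop_nhds_zero_of_lt_one
      (div_nonneg hl0.le ha0.le) hla').const_mul (3072 * (h / l) ^ 2 / a)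
  have hev : ∀ᶠ k : ℕ in atTop, 1 ≤ k ∧ 4 / π * (l / h) ^ k < ε
      ∧ 16 / (π * a) * (l / a) ^ k < ε ∧ 3072 * (h / l) ^ 2 / a * (l / a) ^ k < ε := by
    filter_upwards [eventually_ge_atTop 1, hb1.eventually (gt_mem_nhds hε),
      hb2.eventually (gt_mem_nhds hε), hb3.eventually (gt_mem_nhds hε)]
      with k e0 e1 e2 e3
    exact ⟨e0, e1, e2, e3⟩
  rw [eventually_atTop] at hev
  obtain ⟨K, hK⟩ := hev
  refine ⟨ySeq a K, ySeq_lt_yInf ha0 ha1 K, ?_⟩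
  intro y hy hyInf hyk x hx0 hxπ
  have hy0 : 0 ≤ y := le_of_lt (lt_of_le_of_lt (ySeq_nonneg ha0 K) hy)
  obtain ⟨k, hk1, hk2⟩ := exists_strip ha0 ha1 hy0 hyInf
  have hkK : K ≤ k := by
    have hKk1 : ySeq a K < ySeq a (k + 1) := lt_of_lt_of_le hy hk2.le
    have := (ySeq_strictMono ha0).lt_iff_lt.mp hKk1
    omega
  obtain ⟨h0, e1, e2, e3⟩ := hK k hkK
  have hk0 : k ≠ 0 := by omega
  have h1' : ySeq a k < y := lt_of_le_of_ne hk1 (Ne.symm (hyk k))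
  obtain ⟨pa, pb, pc⟩ := strip_bounds ha0 ha1 hh0 hh1 hl0 hl1 hNpos hlNeq hφdiff hφ01
    hφd0 hφd2 hla hlh hk0 h1' hk2 hx0 hxπ
  exact ⟨lt_of_le_of_lt pa e1, lt_of_le_of_lt pb e2, lt_of_le_of_lt pc e3⟩

end StokesCounterexample
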